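/- With notation as above, the ratio of the 'g-statistic plus position of v-exponents' before and after rotation is computed by: g(p) − g̃(p) = #{ℓ ∈ Q : ℓ < p, b_ℓ = n} − 𝟙(a_p = n)·#{ℓ ∈ Q : ℓ < p} for p ∈ P; and 𝟙(a_p > b_p) − 𝟙(ã_p > b̃_p) = 𝟙(a_p = n) − 𝟙(b_p = n) for p ∈ Q with a_p ≠ b_p. -/
import Mathlib


/-!
STATEMENT 15: With `P, Q` disjoint subsets of the colours, coordinates
`a_p, b_p` in the positions `{1,…,n}` (all `a`-coordinates distinct, all
`b`-coordinates distinct, and `a_p ≠ b_ℓ` whenever `p > ℓ`, `p ∈ P ∪ Q`,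
`ℓ ∈ Q`), and `g(p) = #{ℓ ∈ Q : ℓ < p, a_p < b_ℓ}`, under the cyclic rotation
`x ↦ x + 1 (mod n)`:
 * for `p ∈ P`:
   `g(p) − g̃(p) = #{ℓ ∈ Q : ℓ < p, b_ℓ = n} − 𝟙(a_p = n)·#{ℓ ∈ Q : ℓ < p}`;
 * for `p ∈ Q` with `a_p ≠ b_p`:
   `𝟙(a_p > b_p) − 𝟙(ã_p > b̃_p) = 𝟙(a_p = n) − 𝟙(b_p = n)`.

We take `n+1` colours/positions (so `n+1 ≥ 1`), both modelled by
`Fin (n+1)` with its linear order; the rotation is `x ↦ x + 1` in `Fin (n+1)`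
(addition mod `n+1`), and the top position "`n`" is `Fin.last n`.
-/

open Finset

lemma key15 (n : ℕ) (x y : Fin (n+1)) (h : x ≠ y) :
    (if x < y then (1:ℤ) else 0) - (if x + 1 < y + 1 then (1:ℤ) else 0)
      = (if y = Fin.last n then (1:ℤ) else 0) - (if x = Fin.last n then (1:ℤ) else 0) := by
  have hx := Fin.val_add_one x
  have hy := Fin.val_add_one y
  have hne : x.val ≠ y.val := fun hv => h (Fin.ext hv)
  have hxle : x.val ≤ n := Fin.is_le x
  have hyle : y.val ≤ n := Fin.is_le y
  simp only [Fin.lt_def, Fin.ext_iff, Fin.val_last] at *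
  split_ifs at * <;> omega

/-- effect of the cyclic rotation on `g` and on the `v`-exponent
indicators. -/
theorem rotation_g_and_indicator (n : ℕ) (P Q : Finset (Fin (n + 1)))
    (hPQ : Disjoint P Q) (a b : Fin (n + 1) → Fin (n + 1))
    (ha : Set.InjOn a ↑(P ∪ Q)) (hb : Set.InjOn b ↑Q)
    (hab : ∀ p ∈ P ∪ Q, ∀ l ∈ Q, l < p → a p ≠ b l) :
    (∀ p ∈ P,
      ((Q.filter fun l => l < p ∧ a p < b l).card : ℤ)
          - ((Q.filter fun l => l < p ∧ a p + 1 < b l + 1).card : ℤ)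
        = ((Q.filter fun l => l < p ∧ b l = Fin.last n).card : ℤ)
          - (if a p = Fin.last n then 1 else 0) * ((Q.filter fun l => l < p).card : ℤ)) ∧
    (∀ p ∈ Q, a p ≠ b p →
      (if b p < a p then (1 : ℤ) else 0) - (if b p + 1 < a p + 1 then (1 : ℤ) else 0)
        = (if a p = Fin.last n then (1 : ℤ) else 0)
          - (if b p = Fin.last n then (1 : ℤ) else 0)) := by
  constructor
  · intro p hp
    have hmem : p ∈ P ∪ Q := mem_union_left Q hp
    have hcard : ∀ (C : Fin (n+1) → Prop) [DecidablePred C],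
        ((Q.filter fun l => l < p ∧ C l).card : ℤ)
          = ∑ l ∈ Q.filter (· < p), (if C l then (1:ℤ) else 0) := by
      intro C _
      rw [← Finset.filter_filter, Finset.card_filter]
      push_cast
      rfl
    rw [hcard, hcard, hcard, ← Finset.sum_sub_distrib,
      Finset.sum_congr rfl (fun l hl => key15 n (a p) (b l)
        (hab p hmem l (mem_filter.mp hl).1 (mem_filter.mp hl).2)),
      Finset.sum_sub_distrib, Finset.sum_const]
    ring
  · intro p hp hne
    exact key15 n (b p) (a p) (fun h => hne h.symm)
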